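/- (Idealized Theorem 1 with exact derivatives.) Let A ∈ ℝ, B > 0, w > 0, φ₀ ∈ ℝ, r > 0, and define y(t) = A + B·sin(w·t + φ₀), ζ = w², γ₁(t) = ∫_{t−r}^{t} |y⁽¹⁾(τ)| dτ and γ₂(t) = ∫_{t−r}^{t} |y⁽³⁾(τ)| dτ. Let α₁ > 0, β₁ > 0, let p, q be positive integers with q < p, let t₀ ∈ ℝ, and suppose ζ̂ : [t₀, ∞) → ℝ is differentiable and satisfies, for all t ≥ t₀, ζ̂′(t) = −γ₁(t)⁻¹·( α₁·⌊e(t)⌉^{1+q/p} + β₁·⌊e(t)⌉^{1−q/p} + ζ̂(t)·(|y⁽¹⁾(t)| − |y⁽¹⁾(t−r)|) − (|y⁽³⁾(t)| − |y⁽³⁾(t−r)|) ), where e(t) = ζ̂(t)·γ₁(t) − γ₂(t). Then ζ̂(t) = w² and |ζ̂(t)|^{1/2} = w for all t ≥ t₀ + π·p/(2·q·√(α₁·β₁)). -/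

import Mathlib

/-- The signed power `⌊x⌉^a = |x|^a · sign(x)`. -/
noncomputable def spow (x a : ℝ) : ℝ := |x| ^ a * Real.sign x

private lemma aux_abs_rpow {e : ℝ → ℝ} {x D m : ℝ} (hD : HasDerivAt e D x) (hx : e x ≠ 0) :
    HasDerivAt (fun τ => |e τ| ^ m) (m * |e x| ^ (m - 1) * (Real.sign (e x) * D)) x := by
  have habs : HasDerivAt (fun τ => |e τ|) (Real.sign (e x) * D) x := by
    rcases hx.lt_or_gt with h | h
    · have hev : ∀ᶠ τ in nhds x, |e τ| = -e τ := by
        filter_upwards [hD.continuousAt.eventually_lt continuousAt_const h] with τ hτ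
        exact abs_of_neg hτ
      have := hD.neg.congr_of_eventuallyEq (by filter_upwards [hev] with τ hτ using hτ)
      simpa [Real.sign_of_neg h] using this
    · have hev : ∀ᶠ τ in nhds x, |e τ| = e τ := by
        filter_upwards [continuousAt_const.eventually_lt hD.continuousAt h] with τ hτ
        exact abs_of_pos hτ
      have := hD.congr_of_eventuallyEq (by filter_upwards [hev] with τ hτ using hτ)
      simpa [Real.sign_of_pos h] using this
  have hr := (Real.hasDerivAt_rpow_const (x := |e x|) (p := m)
      (Or.inl (abs_ne_zero.2 hx))).comp x habs
  exact hr

/-- Fixed-time settling for the scalar ODE `e' = -(α₁ ⌊e⌉^{1+m} + β₁ ⌊e⌉^{1-m})`. -/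
private lemma settling {α₁ β₁ m t₀ : ℝ} (hα₁ : 0 < α₁) (hβ₁ : 0 < β₁) (hm : 0 < m)
    {e : ℝ → ℝ}
    (hc : ∀ t, t₀ ≤ t → ContinuousAt e t)
    (hd : ∀ t, t₀ ≤ t → e t ≠ 0 →
      HasDerivAt e (-(α₁ * spow (e t) (1 + m) + β₁ * spow (e t) (1 - m))) t) :
    ∀ t, t₀ + Real.pi / (2 * m * Real.sqrt (α₁ * β₁)) ≤ t → e t = 0 := by
  set s1 := Real.sqrt α₁ with hs1def
  set s2 := Real.sqrt β₁ with hs2def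
  have hs1 : 0 < s1 := Real.sqrt_pos.2 hα₁
  have hs2 : 0 < s2 := Real.sqrt_pos.2 hβ₁
  have hs1sq : s1 ^ 2 = α₁ := Real.sq_sqrt hα₁.le
  have hs2sq : s2 ^ 2 = β₁ := Real.sq_sqrt hβ₁.le
  have hs12 : Real.sqrt (α₁ * β₁) = s1 * s2 := Real.sqrt_mul hα₁.le β₁
  set κ := m * (s1 * s2) with hκdef
  have hκ : 0 < κ := by positivity
  set T := Real.pi / (2 * m * Real.sqrt (α₁ * β₁)) with hTdef
  have hκT : κ * T = Real.pi / 2 := by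
    rw [hTdef, hs12, hκdef]
    field_simp
  have hT : 0 < T := by
    rw [hTdef, hs12]
    positivity
  set g : ℝ → ℝ := fun τ => |e τ| ^ m with hgdef
  set W : ℝ → ℝ := fun τ => Real.arctan (s1 / s2 * g τ) with hWdef
  have hWnonneg : ∀ τ, 0 ≤ W τ := by
    intro τ
    rw [hWdef, ← Real.arctan_zero]
    refine Real.arctan_strictMono.monotone ?_
    have : (0:ℝ) ≤ |e τ| ^ m := Real.rpow_nonneg (abs_nonneg _) m
    positivity
  have hWlt : ∀ τ, W τ < Real.pi / 2 := fun τ => Real.arctan_lt_pi_div_two _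
  have hWcont : ∀ τ, t₀ ≤ τ → ContinuousAt W τ := by
    intro τ hτ
    apply Real.continuous_arctan.continuousAt.comp
    apply ContinuousAt.mul continuousAt_const
    exact (Real.continuousAt_rpow_const _ m (Or.inr hm.le)).comp
      (continuous_abs.continuousAt.comp (hc τ hτ))
  have key : ∀ G : ℝ,
      1 / (1 + (s1 / s2 * G) ^ 2) * (s1 / s2 * -(m * (α₁ * (G * G) + β₁))) = -κ := by
    intro G
    have hden : 1 + (s1 / s2 * G) ^ 2 ≠ 0 := by positivity
    rw [hκdef, ← hs1sq, ← hs2sq]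
    field_simp
    ring
  have hW : ∀ x, t₀ ≤ x → e x ≠ 0 → HasDerivAt W (-κ) x := by
    intro x hx hex
    have hv : (0:ℝ) < |e x| := abs_pos.2 hex
    have hD := hd x hx hex
    have hg := aux_abs_rpow (m := m) hD hex
    have harc := (Real.hasDerivAt_arctan (s1 / s2 * g x)).comp x (hg.const_mul (s1 / s2))
    have hσ : Real.sign (e x) * Real.sign (e x) = 1 := by
      rcases hex.lt_or_gt with h | h
      · simp [Real.sign_of_neg h]
      · simp [Real.sign_of_pos h]
    have h1 : Real.sign (e x) * (-(α₁ * spow (e x) (1 + m) + β₁ * spow (e x) (1 - m)))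
        = -(α₁ * |e x| ^ (1 + m) + β₁ * |e x| ^ (1 - m)) := by
      simp only [spow]
      linear_combination (-(α₁ * |e x| ^ (1 + m) + β₁ * |e x| ^ (1 - m))) * hσ
    have e1 : |e x| ^ (m - 1) * |e x| ^ (1 + m) = g x * g x := by
      rw [hgdef]
      rw [← Real.rpow_add hv, ← Real.rpow_add hv]
      congr 1
      ring
    have e2 : |e x| ^ (m - 1) * |e x| ^ (1 - m) = 1 := by
      rw [← Real.rpow_add hv]
      norm_num
    have h2 : m * |e x| ^ (m - 1) *
        (Real.sign (e x) * (-(α₁ * spow (e x) (1 + m) + β₁ * spow (e x) (1 - m))))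
        = -(m * (α₁ * (g x * g x) + β₁)) := by
      rw [h1]
      have : m * |e x| ^ (m - 1) * (-(α₁ * |e x| ^ (1 + m) + β₁ * |e x| ^ (1 - m)))
          = -(m * (α₁ * (|e x| ^ (m - 1) * |e x| ^ (1 + m))
              + β₁ * (|e x| ^ (m - 1) * |e x| ^ (1 - m)))) := by ring
      rw [this, e1, e2]
      ring
    have hval : 1 / (1 + (s1 / s2 * g x) ^ 2) *
        (s1 / s2 * (m * |e x| ^ (m - 1) *
          (Real.sign (e x) * (-(α₁ * spow (e x) (1 + m) + β₁ * spow (e x) (1 - m))))))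
        = -κ := by
      rw [h2]
      have := key (g x)
      linarith [this]
    rw [← hval]
    exact harc
  have hMVT : ∀ a b, t₀ ≤ a → a < b → (∀ τ ∈ Set.Ioo a b, e τ ≠ 0) →
      W b - W a = -κ * (b - a) := by
    intro a b ha hab hne
    have hcont : ContinuousOn W (Set.Icc a b) := fun τ hτ =>
      (hWcont τ (ha.trans hτ.1)).continuousWithinAt
    obtain ⟨c, hc', hceq⟩ := exists_hasDerivAt_eq_slope W (fun _ => -κ) hab hcont
      (fun x hx => hW x (ha.trans hx.1.le) (hne x hx))
    rw [eq_div_iff (sub_ne_zero.2 hab.ne')] at hceq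
    linarith [hceq]
  have hzero : ∃ s ∈ Set.Icc t₀ (t₀ + T), e s = 0 := by
    by_contra h
    push_neg at h
    have h1 := hMVT t₀ (t₀ + T) le_rfl (by linarith)
      (fun τ hτ => h τ ⟨hτ.1.le, hτ.2.le⟩)
    have h2 := hWnonneg (t₀ + T)
    have h3 := hWlt t₀
    nlinarith [hκT]
  obtain ⟨s, hsI, hse⟩ := hzero
  intro t ht
  by_contra het
  have hst : s ≤ t := hsI.2.trans ht
  set S : Set ℝ := Set.Icc s t ∩ e ⁻¹' {0} with hSdef
  have hsS : s ∈ S := ⟨⟨le_rfl, hst⟩, hse⟩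
  have hScl : IsClosed S := by
    have hcs : ContinuousOn e (Set.Icc s t) := fun τ hτ =>
      (hc τ (hsI.1.trans hτ.1)).continuousWithinAt
    exact hcs.preimage_isClosed_of_isClosed isClosed_Icc isClosed_singleton
  have hSbdd : BddAbove S := BddAbove.mono Set.inter_subset_left bddAbove_Icc
  have huS : sSup S ∈ S := hScl.csSup_mem ⟨s, hsS⟩ hSbdd
  set u := sSup S
  have hut : u < t := lt_of_le_of_ne huS.1.2 (fun h => het (h ▸ huS.2))
  have hne : ∀ τ ∈ Set.Ioo u t, e τ ≠ 0 := by
    intro τ hτ hτ0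
    have : τ ∈ S := ⟨⟨huS.1.1.trans hτ.1.le, hτ.2.le⟩, hτ0⟩
    exact absurd (le_csSup hSbdd this) (not_le.2 hτ.1)
  have h2 := hMVT u t (hsI.1.trans huS.1.1) hut hne
  have hWu : W u = 0 := by
    have heu : e u = 0 := huS.2
    rw [hWdef]
    simp [hgdef, heu, Real.zero_rpow hm.ne']
  have := hWnonneg t
  nlinarith [mul_pos hκ (sub_pos.2 hut)]

theorem fixed_time_frequency_estimation_exact_derivatives
    (A B w φ₀ r : ℝ) (hB : 0 < B) (hw : 0 < w) (hr : 0 < r)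
    (y γ₁ γ₂ : ℝ → ℝ)
    (hy : ∀ t, y t = A + B * Real.sin (w * t + φ₀))
    (hγ₁ : ∀ t, γ₁ t = ∫ τ in (t - r)..t, |deriv y τ|)
    (hγ₂ : ∀ t, γ₂ t = ∫ τ in (t - r)..t, |deriv^[3] y τ|)
    (α₁ β₁ : ℝ) (hα₁ : 0 < α₁) (hβ₁ : 0 < β₁)
    (p q : ℕ) (hp : 0 < p) (hq : 0 < q) (hqp : q < p)
    (t₀ : ℝ) (ζhat : ℝ → ℝ) (e : ℝ → ℝ)
    (he : ∀ t, e t = ζhat t * γ₁ t - γ₂ t)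
    (hdiff : ∀ t, t₀ ≤ t → DifferentiableAt ℝ ζhat t)
    (hlaw : ∀ t, t₀ ≤ t → deriv ζhat t =
      -(γ₁ t)⁻¹ * (α₁ * spow (e t) (1 + (q : ℝ) / p) + β₁ * spow (e t) (1 - (q : ℝ) / p)
        + ζhat t * (|deriv y t| - |deriv y (t - r)|)
        - (|deriv^[3] y t| - |deriv^[3] y (t - r)|))) :
    ∀ t, t ≥ t₀ + Real.pi * p / (2 * q * Real.sqrt (α₁ * β₁)) →
      ζhat t = w ^ 2 ∧ |ζhat t| ^ ((1 : ℝ) / 2) = w := by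
  -- derivatives of y
  have hyf : y = fun t => A + B * Real.sin (w * t + φ₀) := funext hy
  have hlin : ∀ t : ℝ, HasDerivAt (fun τ : ℝ => w * τ + φ₀) w t := by
    intro t
    simpa using ((hasDerivAt_id t).const_mul w).add_const φ₀
  have hy1 : ∀ t, HasDerivAt y (B * w * Real.cos (w * t + φ₀)) t := by
    intro t
    rw [hyf]
    have := (((Real.hasDerivAt_sin (w * t + φ₀)).comp t (hlin t)).const_mul B).const_add A
    rw [show B * w * Real.cos (w * t + φ₀) = B * (Real.cos (w * t + φ₀) * w) by ring]
    exact this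
  have hd1 : deriv y = fun t => B * w * Real.cos (w * t + φ₀) := funext fun t => (hy1 t).deriv
  have hy2 : ∀ t, HasDerivAt (fun t => B * w * Real.cos (w * t + φ₀))
      (-(B * w ^ 2) * Real.sin (w * t + φ₀)) t := by
    intro t
    have := ((Real.hasDerivAt_cos (w * t + φ₀)).comp t (hlin t)).const_mul (B * w)
    rw [show -(B * w ^ 2) * Real.sin (w * t + φ₀) = B * w * (-Real.sin (w * t + φ₀) * w) by ring]
    exact this
  have hd2 : deriv (deriv y) = fun t => -(B * w ^ 2) * Real.sin (w * t + φ₀) := by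
    rw [hd1]; exact funext fun t => (hy2 t).deriv
  have hy3 : ∀ t, HasDerivAt (fun t => -(B * w ^ 2) * Real.sin (w * t + φ₀))
      (-(B * w ^ 3) * Real.cos (w * t + φ₀)) t := by
    intro t
    have := ((Real.hasDerivAt_sin (w * t + φ₀)).comp t (hlin t)).const_mul (-(B * w ^ 2))
    rw [show -(B * w ^ 3) * Real.cos (w * t + φ₀) = -(B * w ^ 2) * (Real.cos (w * t + φ₀) * w) by ring]
    exact this
  have hd3 : deriv^[3] y = fun t => -(B * w ^ 3) * Real.cos (w * t + φ₀) := by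
    show deriv (deriv (deriv y)) = _
    rw [show deriv (deriv y) = fun t => -(B * w ^ 2) * Real.sin (w * t + φ₀) from hd2]
    exact funext fun t => (hy3 t).deriv
  -- |y'''| = w² |y'|
  have habs3 : ∀ τ, |deriv^[3] y τ| = w ^ 2 * |deriv y τ| := by
    intro τ
    rw [hd1, hd3]
    simp only [abs_mul, abs_neg]
    rw [abs_of_pos hB, abs_of_pos hw, abs_of_pos (pow_pos hw 3)]
    ring
  -- continuity and integrability of |y'|
  set f : ℝ → ℝ := fun τ => |deriv y τ| with hfdef
  have hfc : Continuous f := by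
    rw [hfdef, hd1]
    fun_prop
  -- γ₂ = w² γ₁
  have hγ₂w : ∀ t, γ₂ t = w ^ 2 * γ₁ t := by
    intro t
    rw [hγ₂, hγ₁]
    rw [← intervalIntegral.integral_const_mul]
    apply intervalIntegral.integral_congr
    intro τ _
    exact habs3 τ
  -- derivative of γ₁
  set F : ℝ → ℝ := fun t => ∫ τ in (0:ℝ)..t, f τ with hFdef
  have hF : ∀ t, HasDerivAt F (f t) t := fun t => (hfc.integral_hasStrictDerivAt 0 t).hasDerivAt
  have hγ₁F : ∀ t, γ₁ t = F t - F (t - r) := by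
    intro t
    rw [hγ₁, hFdef]
    exact (intervalIntegral.integral_interval_sub_left (hfc.intervalIntegrable 0 t)
      (hfc.intervalIntegrable 0 (t - r))).symm
  have hγ₁d : ∀ t, HasDerivAt γ₁ (f t - f (t - r)) t := by
    intro t
    have h2 : HasDerivAt (fun τ => F (τ - r)) (f (t - r)) t := by
      have := (hF (t - r)).comp t ((hasDerivAt_id t).sub_const r)
      simpa [Function.comp_def] using this
    exact ((hF t).sub h2).congr_of_eventuallyEq
      (Filter.Eventually.of_forall fun τ => hγ₁F τ)
  -- positivity of γ₁
  have hγ₁pos : ∀ t, 0 < γ₁ t := by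
    intro t
    rw [hγ₁]
    simp only [hfdef, hd1]
    -- find τ₁ in Ioo (t-r) t with cos ≠ 0
    obtain ⟨τ₁, hτ₁mem, hτ₁⟩ : ∃ τ₁ ∈ Set.Ioo (t - r) t, Real.cos (w * τ₁ + φ₀) ≠ 0 := by
      set τ₀ := t - r / 2 with hτ₀def
      by_cases hcos : Real.cos (w * τ₀ + φ₀) = 0
      · set ε := min (r / 4) (Real.pi / (2 * w)) with hεdef
        have hπ := Real.pi_pos
        have hε : 0 < ε := by positivity
        have hεr : ε ≤ r / 4 := min_le_left _ _
        have hεπ : w * ε ≤ Real.pi / 2 := by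
          have : ε ≤ Real.pi / (2 * w) := min_le_right _ _
          calc w * ε ≤ w * (Real.pi / (2 * w)) := by nlinarith
            _ = Real.pi / 2 := by field_simp
        refine ⟨τ₀ + ε, ⟨by simp only [hτ₀def]; linarith, by simp only [hτ₀def]; linarith⟩, ?_⟩
        have hexp : w * (τ₀ + ε) + φ₀ = (w * τ₀ + φ₀) + w * ε := by ring
        rw [hexp, Real.cos_add, hcos]
        have hsin : Real.sin (w * τ₀ + φ₀) ≠ 0 := by
          intro h
          have := Real.sin_sq_add_cos_sq (w * τ₀ + φ₀)
          rw [h, hcos] at this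
          norm_num at this
        have hsinpos : 0 < Real.sin (w * ε) := by
          apply Real.sin_pos_of_pos_of_lt_pi (by positivity)
          linarith
        simp only [zero_mul, zero_sub, neg_ne_zero]
        exact mul_ne_zero hsin hsinpos.ne'
      · exact ⟨τ₀, ⟨by simp only [hτ₀def]; linarith, by simp only [hτ₀def]; linarith⟩, hcos⟩
    set g : ℝ → ℝ := fun τ => |B * w * Real.cos (w * τ + φ₀)| with hgdef
    have hgc : Continuous g := by fun_prop
    have hgnn : ∀ τ, 0 ≤ g τ := fun τ => abs_nonneg _
    have hU : IsOpen {τ : ℝ | Real.cos (w * τ + φ₀) ≠ 0} := by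
      have : Continuous fun τ : ℝ => Real.cos (w * τ + φ₀) := by fun_prop
      exact isOpen_ne.preimage this
    obtain ⟨δ, hδpos, hδ⟩ := Metric.isOpen_iff.1 hU τ₁ hτ₁
    set δ' := min (δ / 2) (min ((τ₁ - (t - r)) / 2) ((t - τ₁) / 2)) with hδ'def
    have h1 : t - r < τ₁ := hτ₁mem.1
    have h2 : τ₁ < t := hτ₁mem.2
    have hδ'pos : 0 < δ' := by
      apply lt_min (by linarith)
      apply lt_min <;> linarith
    set a := τ₁ - δ' with hadef
    set b := τ₁ + δ' with hbdef
    have hδ'1 : δ' ≤ δ / 2 := min_le_left _ _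
    have hδ'2 : δ' ≤ (τ₁ - (t - r)) / 2 := (min_le_right _ _).trans (min_le_left _ _)
    have hδ'3 : δ' ≤ (t - τ₁) / 2 := (min_le_right _ _).trans (min_le_right _ _)
    have hta : t - r ≤ a := by simp only [hadef]; linarith
    have hbt : b ≤ t := by simp only [hbdef]; linarith
    have hab : a < b := by simp only [hadef, hbdef]; linarith
    have hpos : ∀ x ∈ Set.Ioo a b, 0 < g x := by
      intro x hx
      have : x ∈ Metric.ball τ₁ δ := by
        rw [Real.ball_eq_Ioo]
        constructor
        · have := hx.1; simp only [hadef] at this; linarith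
        · have := hx.2; simp only [hbdef] at this; linarith
      have hcx : Real.cos (w * x + φ₀) ≠ 0 := hδ this
      simp only [hgdef, abs_pos]
      exact mul_ne_zero (by positivity) hcx
    have hmid : 0 < ∫ τ in a..b, g τ :=
      intervalIntegral.intervalIntegral_pos_of_pos_on (hgc.intervalIntegrable a b) hpos hab
    have hleft : 0 ≤ ∫ τ in (t - r)..a, g τ :=
      intervalIntegral.integral_nonneg hta (fun u _ => hgnn u)
    have hright : 0 ≤ ∫ τ in b..t, g τ :=
      intervalIntegral.integral_nonneg hbt (fun u _ => hgnn u)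
    have hsplit1 : (∫ τ in (t - r)..a, g τ) + ∫ τ in a..t, g τ = ∫ τ in (t - r)..t, g τ :=
      intervalIntegral.integral_add_adjacent_intervals (hgc.intervalIntegrable _ _)
        (hgc.intervalIntegrable _ _)
    have hsplit2 : (∫ τ in a..b, g τ) + ∫ τ in b..t, g τ = ∫ τ in a..t, g τ :=
      intervalIntegral.integral_add_adjacent_intervals (hgc.intervalIntegrable _ _)
        (hgc.intervalIntegrable _ _)
    calc (0:ℝ) < (∫ τ in (t - r)..a, g τ) + ((∫ τ in a..b, g τ) + ∫ τ in b..t, g τ) := by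
          linarith
      _ = ∫ τ in (t - r)..t, g τ := by rw [hsplit2, hsplit1]
  -- derivative of e on [t₀, ∞)
  set m : ℝ := (q : ℝ) / p with hmdef
  have hm : 0 < m := by
    rw [hmdef]
    have hq' : (0:ℝ) < q := Nat.cast_pos.2 hq
    have hp' : (0:ℝ) < p := Nat.cast_pos.2 hp
    positivity
  have hγ₂d : ∀ t, HasDerivAt γ₂ (w ^ 2 * (f t - f (t - r))) t := by
    intro t
    have : HasDerivAt (fun τ => w ^ 2 * γ₁ τ) (w ^ 2 * (f t - f (t - r))) t :=
      (hγ₁d t).const_mul (w ^ 2)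
    exact this.congr_of_eventuallyEq (Filter.Eventually.of_forall fun τ => hγ₂w τ)
  have hed : ∀ t, t₀ ≤ t →
      HasDerivAt e (-(α₁ * spow (e t) (1 + m) + β₁ * spow (e t) (1 - m))) t := by
    intro t hts
    have hz : HasDerivAt ζhat (deriv ζhat t) t := (hdiff t hts).hasDerivAt
    have hprod := (hz.mul (hγ₁d t)).sub (hγ₂d t)
    have heqd : HasDerivAt e
        (deriv ζhat t * γ₁ t + ζhat t * (f t - f (t - r)) - w ^ 2 * (f t - f (t - r))) t :=
      hprod.congr_of_eventuallyEq (Filter.Eventually.of_forall fun τ => he τ)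
    have hval : deriv ζhat t * γ₁ t + ζhat t * (f t - f (t - r)) - w ^ 2 * (f t - f (t - r))
        = -(α₁ * spow (e t) (1 + m) + β₁ * spow (e t) (1 - m)) := by
      rw [hlaw t hts, habs3 t, habs3 (t - r)]
      have hne : γ₁ t ≠ 0 := (hγ₁pos t).ne'
      rw [hmdef]
      field_simp
      ring
    rw [← hval]
    exact heqd
  have hec : ∀ t, t₀ ≤ t → ContinuousAt e t := fun t ht => (hed t ht).continuousAt
  -- apply the settling lemma
  have hsettle := settling hα₁ hβ₁ hm hec (fun t ht _ => hed t ht)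
  intro t ht
  have hbound : t₀ + Real.pi / (2 * m * Real.sqrt (α₁ * β₁)) ≤ t := by
    have hq' : (0:ℝ) < q := Nat.cast_pos.2 hq
    have hp' : (0:ℝ) < p := Nat.cast_pos.2 hp
    have hs : 0 < Real.sqrt (α₁ * β₁) := Real.sqrt_pos.2 (by positivity)
    have : Real.pi / (2 * m * Real.sqrt (α₁ * β₁))
        = Real.pi * p / (2 * q * Real.sqrt (α₁ * β₁)) := by
      rw [hmdef]
      field_simp
    rw [this]
    exact ht
  have het : e t = 0 := hsettle t hbound
  have hζ : ζhat t = w ^ 2 := by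
    have h1 : ζhat t * γ₁ t = w ^ 2 * γ₁ t := by
      have := he t
      rw [het] at this  -- no, het : e t = 0; he t : e t = ...
      have h2 : ζhat t * γ₁ t - γ₂ t = 0 := by rw [← he t, het]
      rw [hγ₂w t] at h2
      linarith
    exact mul_right_cancel₀ (hγ₁pos t).ne' h1
  refine ⟨hζ, ?_⟩
  rw [hζ, abs_of_nonneg (by positivity : (0:ℝ) ≤ w ^ 2), ← Real.sqrt_eq_rpow,
    Real.sqrt_sq hw.le]
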